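/- Let ℓ, ℓ_x, k be naturals with k ≤ ℓ and ℓ > ℓ_x + 1, let x be a natural with 0 ≤ x < 2^{ℓ_x} (a positive input), and let R be a natural with 0 < R < 2^ℓ. Define out := (⌊((x+R) mod 2^ℓ)/2^k⌋ + 2^ℓ − ⌊R/2^k⌋) mod 2^ℓ. Then there exists bit ∈ {0,1} such that out ≡ ⌊x/2^k⌋ − LT((x+R) mod 2^ℓ, x)·2^{ℓ−k} + bit (mod 2^ℓ), as a congruence of integers. -/

import Mathlib

/-- SecureML probabilistic truncation of a positive input. -/
theorem stmt_5 (ℓ ℓx k : ℕ) (hk : k ≤ ℓ) (hℓ : ℓ > ℓx + 1) (x : ℕ) (hx : x < 2 ^ ℓx)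
    (R : ℕ) (hR0 : 0 < R) (hR : R < 2 ^ ℓ) :
    ∃ bit : ℕ, bit ≤ 1 ∧
      Int.ModEq (2 ^ ℓ)
        ((((x + R) % 2 ^ ℓ / 2 ^ k + 2 ^ ℓ - R / 2 ^ k) % 2 ^ ℓ : ℕ) : ℤ)
        (((x / 2 ^ k : ℕ) : ℤ)
          - (if (x + R) % 2 ^ ℓ < x then (1 : ℤ) else 0) * 2 ^ (ℓ - k) + (bit : ℤ)) := by
  set N := 2 ^ ℓ with hN
  set K := 2 ^ k with hK
  set M : ℕ := 2 ^ (ℓ - k) with hM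
  have hKpos : 0 < K := Nat.pow_pos (by norm_num)
  have hNpos : 0 < N := Nat.pow_pos (by norm_num)
  obtain ⟨b, hb, hdiv⟩ : ∃ b, b ≤ 1 ∧ (x + R) / K = x / K + R / K + b := by
    refine ⟨if K ≤ x % K + R % K then 1 else 0, ?_, Nat.add_div hKpos⟩
    split <;> simp
  have hNMK : N = K * M := by rw [hN, hK, hM, ← pow_add]; congr 1; omega
  have hxN : x < N := lt_of_lt_of_le hx (Nat.pow_le_pow_right (by norm_num) (by omega))
  have hrN : R / K ≤ R := Nat.div_le_self _ _
  have hMN : M ≤ N := by rw [hNMK]; exact Nat.le_mul_of_pos_left _ hKpos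
  have hcastN : ((N : ℕ) : ℤ) = (2 : ℤ) ^ ℓ := by rw [hN]; push_cast; ring
  have hcastM : ((M : ℕ) : ℤ) = (2 : ℤ) ^ (ℓ - k) := by rw [hM]; push_cast; ring
  have key : ∀ A : ℕ, ((A % N : ℕ) : ℤ) ≡ (A : ℤ) [ZMOD ((2:ℤ) ^ ℓ)] := by
    intro A
    have h := Int.natCast_modEq_iff.mpr (Nat.mod_modEq A N)
    rwa [hcastN] at h
  clear_value N K M
  refine ⟨b, hb, ?_⟩
  by_cases hcase : x + R < N
  · have hm : (x + R) % N = x + R := Nat.mod_eq_of_lt hcase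
    have hif : ¬ ((x + R) % N < x) := by rw [hm]; omega
    rw [if_neg hif, hm, hdiv]
    set u := x / K with hu
    set r := R / K with hr
    clear_value u r
    have heq : u + r + b + N - r = u + b + N := by omega
    rw [heq]
    refine (key _).trans ?_
    refine Int.modEq_iff_dvd.mpr ⟨-1, ?_⟩
    push_cast [hcastN]
    ring
  · have hmm : (x + R) % N = x + R - N := by
      rw [Nat.mod_eq_sub_mod (le_of_not_gt hcase), Nat.mod_eq_of_lt (by omega)]
    have hif : (x + R) % N < x := by rw [hmm]; omega
    rw [if_pos hif, hmm]
    have h2 : (x + R) / K = M + (x + R - N) / K := by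
      have h1 : x + R = K * M + (x + R - N) := by omega
      nth_rewrite 1 [h1]
      rw [Nat.mul_add_div hKpos]
    set u := x / K with hu
    set r := R / K with hr
    set q := (x + R) / K with hq
    set t := (x + R - N) / K with htd
    clear_value u r q t
    have ht : t = u + r + b - M := by omega
    rw [ht]
    have heq : u + r + b - M + N - r = u + b + N - M := by omega
    rw [heq]
    refine (key _).trans ?_
    refine Int.modEq_iff_dvd.mpr ⟨-1, ?_⟩
    have hc : ((u + b + N - M : ℕ) : ℤ) = (u : ℤ) + b + N - M := by
      have hMle : M ≤ u + b + N := by omega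
      push_cast [Nat.cast_sub hMle]; ring
    rw [hc, hcastN, hcastM]
    ring
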